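/- Let w be the formal power series w = ∑_{m≥1} m^{m−1}·y^m/m! with rational coefficients. Then for every n ≥ 1, the n-th formal derivative of w with respect to y equals exp(n·w) · u^n · R_n(u), where u = (1 − w)⁻¹ is the multiplicative inverse of 1 − w in the formal power series ring (which exists since 1 − w has constant term 1), and R_n(u) denotes the evaluation of the polynomial R_n at the power series u. -/

import Mathlib

/-- Lambert's series `w = ∑_{n ≥ 1} n^(n-1) yⁿ/n!` as a formal power series over `ℚ`. -/
noncomputable def lambertW : PowerSeries ℚ :=
  PowerSeries.mk fun n => if n = 0 then 0 else (n : ℚ) ^ (n - 1) / n.factorial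

/-- The formal exponential `exp f = ∑_{k ≥ 0} f^k/k!` of a formal power series `f`
with zero constant term: since `f^k` has order at least `k`, the coefficient of `yⁿ`
only involves the terms with `k ≤ n`. -/
noncomputable def expOf (f : PowerSeries ℚ) : PowerSeries ℚ :=
  PowerSeries.mk fun n =>
    ∑ k ∈ Finset.range (n + 1), PowerSeries.coeff (R := ℚ) n (f ^ k) / k.factorial

open Polynomial in
/-- The Ramanujan polynomials `R n`, defined by `R 1 = 1` and
`R (n+1) = n (1 + y) R n + y² R n′`. -/
noncomputable def ramanujanR : ℕ → Polynomial ℤ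
  | 0 => 1
  | 1 => 1
  | (n + 2) =>
      ((n : Polynomial ℤ) + 1) * (1 + X) * ramanujanR (n + 1) +
        X ^ 2 * derivative (ramanujanR (n + 1))

open PowerSeries Finset

lemma coeff_derivativeFun' (f : PowerSeries ℚ) (n : ℕ) :
    coeff n f.derivativeFun = coeff (n + 1) f * (n + 1) := coeff_derivative f n

lemma coeff_pow_eq_zero {f : PowerSeries ℚ} (hf : constantCoeff f = 0) {n k : ℕ}
    (h : n < k) : coeff n (f ^ k) = 0 := by
  obtain ⟨g, rfl⟩ := X_dvd_iff.2 hf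
  rw [mul_pow, coeff_X_pow_mul', if_neg (by omega)]

lemma coeff_expOf (f : PowerSeries ℚ) (n : ℕ) :
    coeff n (expOf f) = ∑ k ∈ range (n + 1), coeff n (f ^ k) / k.factorial := by
  simp [expOf]

lemma coeff_expOf' {f : PowerSeries ℚ} (hf : constantCoeff f = 0) {n N : ℕ} (h : n < N) :
    coeff n (expOf f) = ∑ k ∈ range N, coeff n (f ^ k) / k.factorial := by
  rw [coeff_expOf]
  apply Finset.sum_subset (Finset.range_subset_range.2 h)
  intro k _ hk
  rw [coeff_pow_eq_zero hf (by simp at hk; omega), zero_div]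

lemma constantCoeff_expOf (f : PowerSeries ℚ) : constantCoeff (expOf f) = 1 := by
  rw [← coeff_zero_eq_constantCoeff, coeff_expOf]
  simp

lemma constantCoeff_lambertW : constantCoeff lambertW = 0 := by
  rw [← coeff_zero_eq_constantCoeff]
  simp [lambertW, coeff_mk]

lemma coeff_lambertW (n : ℕ) :
    coeff n lambertW = if n = 0 then 0 else (n : ℚ) ^ (n - 1) / n.factorial := by
  simp [lambertW, coeff_mk]

lemma derivativeFun_expOf {f : PowerSeries ℚ} (hf : constantCoeff f = 0) :
    (expOf f).derivativeFun = f.derivativeFun * expOf f := by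
  ext n
  rw [coeff_derivativeFun', coeff_mul]
  have step1 : ∀ p : ℕ × ℕ, p ∈ antidiagonal n →
      coeff p.1 f.derivativeFun * coeff p.2 (expOf f)
        = ∑ b ∈ range (n+1), coeff p.1 f.derivativeFun * coeff p.2 (f ^ b) / b.factorial := by
    intro p hp
    have hle : p.2 ≤ n := by
      have := Finset.HasAntidiagonal.mem_antidiagonal.1 hp; omega
    rw [coeff_expOf' hf (Nat.lt_succ_of_le hle), mul_sum]
    simp [mul_div_assoc]
  rw [Finset.sum_congr rfl step1, Finset.sum_comm]
  have step2 : ∀ b : ℕ, b ∈ range (n+1) →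
      (∑ p ∈ antidiagonal n, coeff p.1 f.derivativeFun * coeff p.2 (f ^ b) / b.factorial)
        = coeff (n+1) (f ^ (b+1)) * (n+1) / ((b+1) * b.factorial) := by
    intro b _
    rw [← Finset.sum_div, ← coeff_mul]
    have hdd : ∀ g : PowerSeries ℚ, g.derivativeFun = PowerSeries.derivative ℚ g := fun _ => rfl
    have h1 : derivativeFun (f ^ (b+1)) = (b+1) • ((f ^ b) * derivativeFun f) := by
      have h := Derivation.leibniz_pow (D := PowerSeries.derivative ℚ) (a := f) (b+1)
      rw [Nat.add_sub_cancel] at h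
      rw [hdd, h, smul_eq_mul, hdd f]
    have h2 : coeff (n+1) (f^(b+1)) * (n+1) = ((b:ℚ)+1) * coeff n (f ^ b * derivativeFun f) := by
      rw [← coeff_derivativeFun', h1, map_nsmul]
      push_cast
      ring
    rw [mul_comm f.derivativeFun, h2]
    have hb : ((b:ℚ)+1) ≠ 0 := by positivity
    field_simp
  rw [Finset.sum_congr rfl step2, coeff_expOf]
  rw [Finset.sum_range_succ']
  have h0 : coeff (R := ℚ) (n+1) ((f:ℚ⟦X⟧) ^ 0) / ((Nat.factorial 0 : ℕ) : ℚ) = 0 := by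
    simp
  rw [h0, add_zero, Finset.sum_mul]
  refine Finset.sum_congr rfl fun b _ => ?_
  have hfac : ((b+1).factorial : ℚ) = ((b:ℚ)+1) * b.factorial := by
    rw [Nat.factorial_succ]; push_cast; ring
  rw [hfac]
  push_cast
  ring

lemma ode_unique {g h1 h2 : PowerSeries ℚ} (e1 : h1.derivativeFun = g * h1)
    (e2 : h2.derivativeFun = g * h2) (e0 : constantCoeff h1 = constantCoeff h2) :
    h1 = h2 := by
  ext n
  induction n using Nat.strong_induction_on with
  | _ n ih =>
    match n with
    | 0 => simpa [coeff_zero_eq_constantCoeff] using e0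
    | Nat.succ n =>
      have c1 := congrArg (coeff n) e1
      have c2 := congrArg (coeff n) e2
      rw [coeff_derivativeFun', coeff_mul] at c1 c2
      have hsum : ∑ p ∈ antidiagonal n, coeff p.1 g * coeff p.2 h1
          = ∑ p ∈ antidiagonal n, coeff p.1 g * coeff p.2 h2 := by
        refine Finset.sum_congr rfl fun p hp => ?_
        have hle : p.2 ≤ n := by have := Finset.HasAntidiagonal.mem_antidiagonal.1 hp; omega
        rw [ih p.2 (by omega)]
      have hn : ((n:ℚ)+1) ≠ 0 := by positivity
      exact mul_right_cancel₀ hn (c1.trans (hsum.trans c2.symm))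

lemma alt_pascal (m : ℕ) (f : ℕ → ℚ) :
    ∑ k ∈ range (m+2), (-1:ℚ)^k * ((m+1).choose k) * f k
      = (∑ k ∈ range (m+1), (-1:ℚ)^k * (m.choose k) * f k)
        - ∑ k ∈ range (m+1), (-1:ℚ)^k * (m.choose k) * f (k+1) := by
  rw [Finset.sum_range_succ' _ (m+1),
    Finset.sum_range_succ' (fun k => (-1:ℚ)^k * (m.choose k) * f k) m]
  have hch : ∀ k, (((m+1).choose (k+1) : ℕ) : ℚ) = m.choose k + m.choose (k+1) := by
    intro k; rw [Nat.choose_succ_succ]; push_cast; ring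
  have hsplit : ∑ k ∈ range (m+1), (-1:ℚ)^(k+1) * ((m+1).choose (k+1)) * f (k+1)
      = (∑ k ∈ range (m+1), (-1:ℚ)^(k+1) * (m.choose k) * f (k+1))
        + ∑ k ∈ range (m+1), (-1:ℚ)^(k+1) * (m.choose (k+1)) * f (k+1) := by
    rw [← Finset.sum_add_distrib]
    refine Finset.sum_congr rfl fun k _ => ?_
    rw [hch]; ring
  rw [hsplit]
  have hlast : ∑ k ∈ range (m+1), (-1:ℚ)^(k+1) * (m.choose (k+1)) * f (k+1)
      = ∑ k ∈ range m, (-1:ℚ)^(k+1) * (m.choose (k+1)) * f (k+1) := by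
    rw [Finset.sum_range_succ]
    simp [Nat.choose_succ_self]
  rw [hlast]
  have hneg : ∑ k ∈ range (m+1), (-1:ℚ)^(k+1) * (m.choose k) * f (k+1)
      = - ∑ k ∈ range (m+1), (-1:ℚ)^k * (m.choose k) * f (k+1) := by
    rw [← Finset.sum_neg_distrib]
    refine Finset.sum_congr rfl fun k _ => ?_
    ring
  rw [hneg]
  simp
  ring

lemma finite_diff (m : ℕ) : ∀ j, j < m → ∀ x : ℚ,
    ∑ k ∈ range (m+1), (-1:ℚ)^k * (m.choose k) * (x + k)^j = 0 := by
  induction m with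
  | zero => intro j hj; omega
  | succ m ih =>
    intro j hj x
    have hshift : ∀ y : ℚ, ∑ k ∈ range (m+1), (-1:ℚ)^k * (m.choose k) * (y + ((k:ℕ)+1:ℕ))^j
        = ∑ k ∈ range (m+1), (-1:ℚ)^k * (m.choose k) * ((y+1) + k)^j := by
      intro y
      refine Finset.sum_congr rfl fun k _ => ?_
      push_cast; ring_nf
    have key := alt_pascal m (fun k => (x + k)^j)
    rcases Nat.lt_or_ge j m with hlt | hge
    · rw [key, hshift x, ih j hlt x, ih j hlt (x+1), sub_zero]
    · have hj' : j = m := by omega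
      have const : ∀ y : ℚ, ∑ k ∈ range (m+1), (-1:ℚ)^k * (m.choose k) * (y + k)^m
          = ∑ k ∈ range (m+1), (-1:ℚ)^k * (m.choose k) * (k:ℚ)^m := by
        intro y
        calc ∑ k ∈ range (m+1), (-1:ℚ)^k * (m.choose k) * (y + k)^m
            = ∑ k ∈ range (m+1), ∑ r ∈ range (m+1),
                (-1:ℚ)^k * (m.choose k) * (y^r * (k:ℚ)^(m-r) * (m.choose r)) := by
              refine Finset.sum_congr rfl fun k _ => ?_
              rw [add_pow, Finset.mul_sum]
          _ = ∑ r ∈ range (m+1), y^r * (m.choose r)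
                * ∑ k ∈ range (m+1), (-1:ℚ)^k * (m.choose k) * (k:ℚ)^(m-r) := by
              rw [Finset.sum_comm]
              refine Finset.sum_congr rfl fun r _ => ?_
              rw [Finset.mul_sum]
              refine Finset.sum_congr rfl fun k _ => ?_
              ring
          _ = ∑ k ∈ range (m+1), (-1:ℚ)^k * (m.choose k) * (k:ℚ)^m := by
              rw [Finset.sum_range_succ' _ m]
              have hz : ∀ r ∈ range m, y^(r+1) * ((m.choose (r+1) : ℕ) : ℚ)
                  * (∑ k ∈ range (m+1), (-1:ℚ)^k * (m.choose k) * (k:ℚ)^(m-(r+1))) = 0 := by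
                intro r hr
                have h := ih (m-(r+1)) (by simp at hr; omega) 0
                simp only [zero_add] at h
                rw [h, mul_zero]
              rw [Finset.sum_eq_zero hz, zero_add]
              simp
      subst hj'
      rw [key, hshift x, const x, const (x+1), sub_self]

lemma inner_vanish (m : ℕ) (hm : 2 ≤ m) :
    ∑ k ∈ range m, ((m.choose k : ℕ) : ℚ) * (-1:ℚ)^k * ((m-k:ℕ):ℚ)^(m-1) = 0 := by
  have hext : ∑ k ∈ range m, ((m.choose k : ℕ) : ℚ) * (-1:ℚ)^k * ((m-k:ℕ):ℚ)^(m-1)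
      = ∑ k ∈ range (m+1), ((m.choose k : ℕ) : ℚ) * (-1:ℚ)^k * ((m-k:ℕ):ℚ)^(m-1) := by
    rw [Finset.sum_range_succ, Nat.sub_self]
    have : ((0:ℕ):ℚ)^(m-1) = 0 := by
      rw [Nat.cast_zero, zero_pow]; omega
    rw [this, mul_zero, add_zero]
  rw [hext]
  have hrefl := Finset.sum_range_reflect
    (fun k => ((m.choose k : ℕ) : ℚ) * (-1:ℚ)^k * ((m-k:ℕ):ℚ)^(m-1)) (m+1)
  simp only [Nat.add_sub_cancel] at hrefl
  rw [← hrefl]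
  have hterm : ∀ k ∈ range (m+1),
      ((m.choose (m-k) : ℕ) : ℚ) * (-1:ℚ)^(m-k) * ((m-(m-k):ℕ):ℚ)^(m-1)
        = (-1:ℚ)^m * ((-1:ℚ)^k * (m.choose k) * ((0:ℚ) + k)^(m-1)) := by
    intro k hk
    have hk' : k ≤ m := by simp at hk; omega
    have h1 : m.choose (m-k) = m.choose k := Nat.choose_symm hk'
    have h2 : m - (m-k) = k := by omega
    have h3 : (-1:ℚ)^(m-k) * (-1:ℚ)^k = (-1:ℚ)^m := by
      rw [← pow_add]; congr 1; omega
    have h5 : (-1:ℚ)^k * (-1:ℚ)^k = 1 := by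
      rw [← pow_add, ← two_mul, pow_mul]; norm_num
    have h4 : (-1:ℚ)^(m-k) = (-1:ℚ)^m * (-1:ℚ)^k := by
      rw [← h3, mul_assoc, h5, mul_one]
    rw [h1, h2, h4, zero_add]
    ring
  rw [Finset.sum_congr rfl hterm, ← Finset.mul_sum]
  rw [finite_diff m (m-1) (by omega) 0, mul_zero]

lemma abel_tree (n : ℕ) (hn : 1 ≤ n) :
    ∑ i ∈ range n, (n.choose i : ℚ) * (i:ℚ)^i * ((n-i:ℕ):ℚ)^(n-i-1) = (n:ℚ)^n := by
  have step1 : ∀ i ∈ range n, (n.choose i : ℚ) * (i:ℚ)^i * ((n-i:ℕ):ℚ)^(n-i-1)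
      = ∑ j ∈ range n, (n.choose i : ℚ) * (i.choose j) * (-1:ℚ)^(i-j) * (n:ℚ)^j
          * ((n-i:ℕ):ℚ)^(n-j-1) := by
    intro i hi
    have hi' : i < n := mem_range.1 hi
    have hcast : (i:ℚ) = (n:ℚ) + (-((n-i:ℕ):ℚ)) := by
      push_cast [Nat.cast_sub hi'.le]; ring
    rw [hcast, add_pow]
    rw [Finset.mul_sum, Finset.sum_mul]
    rw [Finset.sum_subset (Finset.range_subset_range.2 (by omega : i + 1 ≤ n))]
    · refine Finset.sum_congr rfl fun j hj => ?_
      rcases Nat.lt_or_ge i j with h | h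
      · have hz : i.choose j = 0 := Nat.choose_eq_zero_of_lt h
        rw [hz]; push_cast; ring
      · have hexp : (n - j - 1) = (i - j) + (n - i - 1) := by omega
        rw [neg_pow, hexp, pow_add]
        push_cast
        ring
    · intro j _ hj
      simp only [mem_range, not_lt] at hj
      have hz : i.choose j = 0 := Nat.choose_eq_zero_of_lt (by omega)
      rw [hz]
      push_cast
      ring
  rw [Finset.sum_congr rfl step1, Finset.sum_comm]
  have step2 : ∀ j ∈ range n,
      (∑ i ∈ range n, (n.choose i : ℚ) * (i.choose j) * (-1:ℚ)^(i-j) * (n:ℚ)^j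
          * ((n-i:ℕ):ℚ)^(n-j-1))
      = (n.choose j : ℚ) * (n:ℚ)^j *
          ∑ k ∈ range (n-j), (((n-j).choose k : ℕ) : ℚ) * (-1:ℚ)^k
            * ((n-j-k:ℕ):ℚ)^(n-j-1) := by
    intro j hj
    have hj' : j < n := mem_range.1 hj
    have hsub : Finset.Ico j n ⊆ range n := by
      intro x hx; simp at hx ⊢; omega
    rw [← Finset.sum_subset hsub (by
      intro i hin hi
      simp only [Finset.mem_range] at hin
      simp only [Finset.mem_Ico, not_and, not_le] at hi
      have hij : i < j := by
        by_contra hc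
        exact absurd hin (hi (by omega))
      have hz : i.choose j = 0 := Nat.choose_eq_zero_of_lt hij
      rw [hz]; push_cast; ring)]
    rw [Finset.sum_Ico_eq_sum_range]
    rw [Finset.mul_sum]
    refine Finset.sum_congr rfl fun k hk => ?_
    have hk' : k < n - j := by simpa using hk
    have hch : n.choose (j+k) * (j+k).choose j = n.choose j * (n-j).choose k := by
      have := Nat.choose_mul (n := n) (show j ≤ j + k by omega)
      simpa using this
    have hchq : ((n.choose (j+k) : ℕ) : ℚ) * ((j+k).choose j : ℚ)
        = (n.choose j : ℚ) * ((n-j).choose k : ℚ) := by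
      exact_mod_cast congrArg (Nat.cast : ℕ → ℚ) hch
    have h1 : (j + k) - j = k := by omega
    have h2 : n - (j + k) = n - j - k := by omega
    rw [h1, h2]
    calc (n.choose (j+k) : ℚ) * ((j+k).choose j) * (-1:ℚ)^k * (n:ℚ)^j * ((n-j-k:ℕ):ℚ)^(n-j-1)
        = ((n.choose (j+k) : ℚ) * ((j+k).choose j)) * ((-1:ℚ)^k * (n:ℚ)^j * ((n-j-k:ℕ):ℚ)^(n-j-1)) := by ring
      _ = ((n.choose j : ℚ) * ((n-j).choose k : ℚ)) * ((-1:ℚ)^k * (n:ℚ)^j * ((n-j-k:ℕ):ℚ)^(n-j-1)) := by rw [hchq]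
      _ = (n.choose j : ℚ) * (n:ℚ)^j * ((((n-j).choose k : ℕ) : ℚ) * (-1:ℚ)^k * ((n-j-k:ℕ):ℚ)^(n-j-1)) := by ring
  rw [Finset.sum_congr rfl step2]
  rw [Finset.sum_eq_single_of_mem (n-1) (by simp; omega)]
  · have h1 : n - (n-1) = 1 := by omega
    have h2 : n.choose (n-1) = n := by
      have := Nat.choose_symm (show n - 1 ≤ n by omega)
      rw [h1] at this
      rw [← this, Nat.choose_one_right]
    rw [h1, h2]
    simp only [Finset.range_one, Finset.sum_singleton]
    norm_num
    have hrw : (n:ℚ)^n = (n:ℚ)^(n-1) * n := by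
      have h := (pow_succ (n:ℚ) (n-1)).symm
      rw [Nat.sub_add_cancel hn] at h
      exact h.symm
    rw [hrw]; ring
  · intro j hj hne
    have hj' : j < n := mem_range.1 hj
    rw [inner_vanish (n-j) (by omega), mul_zero]

lemma abel_tree' (n : ℕ) :
    ∑ k ∈ range n, (((n+1).choose (k+1) : ℕ) : ℚ) * ((k:ℚ)+1)^(k+1) * ((n-k:ℕ):ℚ)^(n-k-1)
      = (n:ℚ) * ((n:ℚ)+1)^n := by
  have h := abel_tree (n+1) (by omega)
  rw [Finset.sum_range_succ' _ n] at h
  have h0 : ((n+1).choose 0 : ℚ) * ((0:ℕ):ℚ)^(0:ℕ) * (((n+1)-0:ℕ):ℚ)^((n+1)-0-1)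
      = ((n:ℚ)+1)^n := by
    push_cast
    norm_num
  rw [h0] at h
  have hterm : ∀ k ∈ range n,
      ((n+1).choose (k+1) : ℚ) * ((k+1:ℕ):ℚ)^(k+1) * (((n+1)-(k+1):ℕ):ℚ)^((n+1)-(k+1)-1)
        = (((n+1).choose (k+1) : ℕ) : ℚ) * ((k:ℚ)+1)^(k+1) * ((n-k:ℕ):ℚ)^(n-k-1) := by
    intro k hk
    have e1 : (n+1)-(k+1) = n - k := by omega
    have e2 : (n+1)-(k+1)-1 = n-k-1 := by omega
    rw [e1]
    push_cast
    ring
  rw [Finset.sum_congr rfl hterm] at h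
  -- h : S + (n+1)^n = (n+1)^(n+1)
  have hpow : ((n:ℚ)+1)^(n+1) = ((n:ℚ)+1)^n * ((n:ℚ)+1) := pow_succ _ _
  have : (((n+1):ℕ):ℚ)^(n+1) = ((n:ℚ)+1)^(n+1) := by push_cast; ring
  rw [this, hpow] at h
  linarith [h]

lemma lambert_ode :
    (X : PowerSeries ℚ) * (lambertW.derivativeFun * (1 - lambertW)) = lambertW := by
  ext n
  cases n with
  | zero =>
    rw [coeff_zero_eq_constantCoeff, map_mul, constantCoeff_X, zero_mul,
      ← coeff_zero_eq_constantCoeff, coeff_lambertW]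
    simp
  | succ n =>
    rw [coeff_succ_X_mul, mul_sub, mul_one, map_sub, coeff_derivativeFun', coeff_mul]
    have hfac : ((n+1).factorial : ℚ) ≠ 0 := by
      exact_mod_cast Nat.factorial_ne_zero (n+1)
    have hS : ∑ p ∈ antidiagonal n, coeff p.1 lambertW.derivativeFun * coeff p.2 lambertW
        = (n:ℚ) * ((n:ℚ)+1)^n / (n+1).factorial := by
      rw [Finset.Nat.sum_antidiagonal_eq_sum_range_succ_mk]
      dsimp only
      rw [Finset.sum_range_succ]
      have hz : coeff (n-n) lambertW = 0 := by
        rw [Nat.sub_self, coeff_lambertW]; simp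
      rw [hz, mul_zero, add_zero]
      rw [eq_div_iff hfac, Finset.sum_mul]
      rw [← abel_tree' n]
      refine Finset.sum_congr rfl fun k hk => ?_
      have hk' : k < n := mem_range.1 hk
      rw [coeff_derivativeFun', coeff_lambertW, coeff_lambertW]
      rw [if_neg (Nat.succ_ne_zero k), if_neg (by omega : ¬ n - k = 0)]
      have hchoosefac : (((n+1).choose (k+1) : ℕ) : ℚ) * ((k+1).factorial) * ((n-k).factorial)
          = ((n+1).factorial : ℚ) := by
        have := Nat.choose_mul_factorial_mul_factorial (show k+1 ≤ n+1 by omega)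
        have e : (n+1)-(k+1) = n-k := by omega
        rw [e] at this
        exact_mod_cast congrArg (Nat.cast : ℕ → ℚ) this
      have hf1 : ((k+1).factorial : ℚ) ≠ 0 := by exact_mod_cast Nat.factorial_ne_zero _
      have hf2 : ((n-k).factorial : ℚ) ≠ 0 := by exact_mod_cast Nat.factorial_ne_zero _
      have e3 : (k+1) - 1 = k := by omega
      rw [e3]
      rw [← hchoosefac]
      push_cast
      field_simp
      ring
    rw [hS, coeff_lambertW, if_neg (Nat.succ_ne_zero n)]
    have e : (n+1) - 1 = n := by omega
    rw [e]
    push_cast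
    field_simp
    ring

lemma derivativeFun_eq (f : PowerSeries ℚ) : f.derivativeFun = PowerSeries.derivative ℚ f := rfl

lemma derivativeFun_inv (f : PowerSeries ℚ) :
    (f⁻¹).derivativeFun = -f⁻¹^2 * f.derivativeFun := by
  rw [derivativeFun_eq, derivativeFun_eq, PowerSeries.derivative_inv']

lemma expOf_lambertW_inv_cancel : expOf lambertW * (expOf lambertW)⁻¹ = 1 :=
  PowerSeries.mul_inv_cancel _ (by rw [constantCoeff_expOf]; norm_num)

lemma lambertW_eq_X_mul_expOf : lambertW = X * expOf lambertW := by
  set h := expOf lambertW with hh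
  set q : PowerSeries ℚ := lambertW * h⁻¹ with hq
  have hinv : h * h⁻¹ = 1 := expOf_lambertW_inv_cancel
  have hode : (X : PowerSeries ℚ) * q.derivativeFun = q := by
    have hdq : q.derivativeFun
        = lambertW.derivativeFun * h⁻¹ + lambertW * (-h⁻¹^2 * h.derivativeFun) := by
      rw [hq, derivativeFun_mul, derivativeFun_inv]
      simp only [smul_eq_mul]
      ring
    have hdh : h.derivativeFun = lambertW.derivativeFun * h :=
      derivativeFun_expOf constantCoeff_lambertW
    have key : (X : PowerSeries ℚ) * q.derivativeFun
        = (X * (lambertW.derivativeFun * (1 - lambertW))) * h⁻¹ := by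
      rw [hdq, hdh]
      linear_combination (-(X * lambertW * lambertW.derivativeFun * h⁻¹)) * hinv
    rw [key, lambert_ode, hq]
  have hq0 : coeff 0 q = 0 := by
    have h0 := congrArg (constantCoeff) hode
    rw [map_mul, constantCoeff_X, zero_mul] at h0
    rw [coeff_zero_eq_constantCoeff]
    exact h0.symm
  have hq1 : coeff 1 q = 1 := by
    rw [hq, coeff_mul]
    rw [Finset.Nat.sum_antidiagonal_eq_sum_range_succ_mk]
    dsimp only
    rw [Finset.sum_range_succ, Finset.sum_range_one]
    rw [coeff_lambertW, coeff_lambertW]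
    simp only [if_pos rfl, if_neg (one_ne_zero)]
    rw [Nat.sub_self, coeff_zero_eq_constantCoeff, PowerSeries.constantCoeff_inv,
      constantCoeff_expOf]
    norm_num
  have hqn : ∀ n, 2 ≤ n → coeff n q = 0 := by
    intro n hn
    obtain ⟨m, rfl⟩ : ∃ m, n = m + 1 := ⟨n-1, by omega⟩
    have := congrArg (coeff (m+1)) hode
    rw [coeff_succ_X_mul, coeff_derivativeFun'] at this
    have hm : (0:ℚ) < m := by exact_mod_cast (by omega : 0 < m)
    have : coeff (m+1) q * ((m:ℚ)) = 0 := by linarith [this]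
    rcases mul_eq_zero.1 this with h | h
    · exact h
    · exact absurd h (by positivity)
  have hqX : q = X := by
    ext n
    rw [PowerSeries.coeff_X]
    match n with
    | 0 => rw [hq0]; norm_num
    | 1 => rw [hq1]; norm_num
    | (m+2) =>
      rw [hqn (m+2) (by omega), if_neg (by omega)]
  calc lambertW = lambertW * (h⁻¹ * h) := by
        rw [mul_comm h⁻¹ h, hinv, mul_one]
    _ = q * h := by rw [hq]; ring
    _ = X * h := by rw [hqX]
  
lemma one_sub_lambertW_mul_inv : (1 - lambertW) * (1 - lambertW)⁻¹ = 1 :=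
  PowerSeries.mul_inv_cancel _ (by
    rw [map_sub, constantCoeff_one, constantCoeff_lambertW]; norm_num)

lemma lambertW_derivative :
    lambertW.derivativeFun = expOf lambertW * (1 - lambertW)⁻¹ := by
  have hcancel : lambertW.derivativeFun * (1 - lambertW) = expOf lambertW := by
    apply mul_left_cancel₀ (PowerSeries.X_ne_zero : (X : PowerSeries ℚ) ≠ 0)
    rw [lambert_ode]
    exact lambertW_eq_X_mul_expOf
  calc lambertW.derivativeFun
      = lambertW.derivativeFun * ((1 - lambertW) * (1 - lambertW)⁻¹) := by
        rw [one_sub_lambertW_mul_inv, mul_one]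
    _ = (lambertW.derivativeFun * (1 - lambertW)) * (1 - lambertW)⁻¹ := by ring
    _ = expOf lambertW * (1 - lambertW)⁻¹ := by rw [hcancel]

lemma derivativeFun_eq' (f : PowerSeries ℚ) : f.derivativeFun = PowerSeries.derivative ℚ f := rfl

lemma derivativeFun_inv' (f : PowerSeries ℚ) :
    (f⁻¹).derivativeFun = -f⁻¹^2 * f.derivativeFun := by
  rw [derivativeFun_eq', derivativeFun_eq', PowerSeries.derivative_inv']

lemma derivativeFun_sub (f g : PowerSeries ℚ) :
    (f - g).derivativeFun = f.derivativeFun - g.derivativeFun := by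
  rw [derivativeFun_eq', derivativeFun_eq', derivativeFun_eq', map_sub]

lemma derivativeFun_pow (f : PowerSeries ℚ) (m : ℕ) :
    (f ^ (m+1)).derivativeFun = (m+1) • (f ^ m * f.derivativeFun) := by
  have h := Derivation.leibniz_pow (D := PowerSeries.derivative ℚ) (a := f) (m+1)
  rw [Nat.add_sub_cancel] at h
  rw [derivativeFun_eq', h, smul_eq_mul, derivativeFun_eq']

lemma expOf_add {f g : PowerSeries ℚ} (hf : constantCoeff f = 0)
    (hg : constantCoeff g = 0) : expOf (f + g) = expOf f * expOf g := by
  refine ode_unique (g := (f+g).derivativeFun) (derivativeFun_expOf (by rw [map_add, hf, hg, add_zero])) ?_ ?_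
  · rw [derivativeFun_mul, derivativeFun_expOf hf, derivativeFun_expOf hg, derivativeFun_add]
    simp only [smul_eq_mul]
    ring
  · rw [constantCoeff_expOf, map_mul, constantCoeff_expOf, constantCoeff_expOf, mul_one]

lemma derivativeFun_algebraMap (a : ℤ) :
    (algebraMap ℤ (PowerSeries ℚ) a).derivativeFun = 0 := by
  have h1 : algebraMap ℤ (PowerSeries ℚ) a = ((a : ℤ) : PowerSeries ℚ) := eq_intCast _ a
  have h2 : (PowerSeries.C (R := ℚ)) ((a : ℤ) : ℚ) = ((a : ℤ) : PowerSeries ℚ) :=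
    map_intCast (PowerSeries.C (R := ℚ)) a
  rw [h1, ← h2]
  exact derivative_C

lemma derivativeFun_aeval (p : Polynomial ℤ) (f : PowerSeries ℚ) :
    (Polynomial.aeval f p).derivativeFun
      = Polynomial.aeval f (Polynomial.derivative p) * f.derivativeFun := by
  induction p using Polynomial.induction_on' with
  | add p q hp hq =>
    rw [map_add, derivativeFun_add, hp, hq]
    simp only [map_add]
    ring
  | monomial n a =>
    rw [Polynomial.aeval_monomial, Polynomial.derivative_monomial, Polynomial.aeval_monomial]
    cases n with
    | zero =>
      simp only [pow_zero, mul_one, Nat.cast_zero, mul_zero, Polynomial.aeval_monomial]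
      rw [derivativeFun_algebraMap]
      simp
    | succ m =>
      rw [derivativeFun_mul, derivativeFun_pow, derivativeFun_algebraMap, Nat.add_sub_cancel,
        map_mul]
      simp only [smul_eq_mul, zero_mul, smul_zero, nsmul_eq_mul, zero_add, add_zero, mul_zero]
      push_cast
      ring

/-- The `n`-th formal derivative of Lambert'"'"'s series `w` equals
`exp(n w) · uⁿ · R_n(u)` where `u = (1 - w)⁻¹`. -/
theorem lambertW_iterated_derivative (n : ℕ) (hn : 1 ≤ n) :
    (fun f : PowerSeries ℚ => f.derivativeFun)^[n] lambertW =
      expOf ((n : ℚ) • lambertW) * (1 - lambertW)⁻¹ ^ n *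
        Polynomial.aeval (1 - lambertW)⁻¹ (ramanujanR n) := by
  induction n, hn using Nat.le_induction with
  | base =>
    simp only [Function.iterate_one, Nat.cast_one, one_smul, pow_one]
    have hR : ramanujanR 1 = 1 := rfl
    rw [hR, map_one, mul_one]
    exact lambertW_derivative
  | succ n hn ih =>
    obtain ⟨k, rfl⟩ : ∃ k, n = k + 1 := ⟨n-1, by omega⟩
    rw [Function.iterate_succ_apply', ih]
    set U : PowerSeries ℚ := (1 - lambertW)⁻¹ with hU
    set P : PowerSeries ℚ := Polynomial.aeval U (ramanujanR (k+1)) with hP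
    set Q : PowerSeries ℚ := Polynomial.aeval U (Polynomial.derivative (ramanujanR (k+1)))
      with hQ
    set E : PowerSeries ℚ := expOf (((k+1:ℕ) : ℚ) • lambertW) with hE
    set e : PowerSeries ℚ := expOf lambertW with he
    have hW' : lambertW.derivativeFun = e * U := lambertW_derivative
    have hccs : constantCoeff ((((k+1:ℕ)):ℚ) • lambertW) = 0 := by
      rw [PowerSeries.smul_eq_C_mul, map_mul, constantCoeff_lambertW, mul_zero]
    have hdU : U.derivativeFun = e * U^3 := by
      rw [hU, derivativeFun_inv', derivativeFun_sub, derivativeFun_one, ← hU, hW']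
      ring
    have hdE : E.derivativeFun = ((k+1:ℕ) : ℚ) • lambertW.derivativeFun * E := by
      rw [hE, derivativeFun_expOf hccs, derivativeFun_smul]
    have hsplit : (((k+1)+1:ℕ):ℚ) • lambertW = ((k+1:ℕ):ℚ) • lambertW + lambertW := by
      push_cast
      rw [add_smul, one_smul]
    have hEmul : expOf ((((k+1)+1:ℕ):ℚ) • lambertW) = E * e := by
      rw [hsplit, expOf_add hccs constantCoeff_lambertW, hE, he]
    have hRam : ramanujanR (k+2) = ((k : Polynomial ℤ) + 1) * (1 + Polynomial.X)
        * ramanujanR (k+1) + Polynomial.X^2 * Polynomial.derivative (ramanujanR (k+1)) := rfl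
    have hAev : Polynomial.aeval U (ramanujanR ((k+1)+1))
        = (((k:ℕ) : PowerSeries ℚ) + 1) * (1 + U) * P + U^2 * Q := by
      show Polynomial.aeval U (ramanujanR (k+2)) = _
      rw [hRam]
      simp only [map_add, map_mul, map_one, map_pow, Polynomial.aeval_X, map_natCast]
      rw [← hP, ← hQ]
    have hdE' : E.derivativeFun = (((k+1:ℕ)) : PowerSeries ℚ) * lambertW.derivativeFun * E := by
      rw [hdE, PowerSeries.smul_eq_C_mul, map_natCast]
    rw [hEmul, hAev]
    rw [derivativeFun_mul, derivativeFun_mul, derivativeFun_pow, hdE', hdU,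
      hP, derivativeFun_aeval, ← hP, ← hQ, hdU, hW']
    simp only [smul_eq_mul, nsmul_eq_mul]
    push_cast
    ring
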